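/- Jackson's q-Pfaff-Saalschütz summation: for complex numbers a, b, c with c ≠ 0, c/(ab) well-defined, and a nonnegative integer N, the terminating balanced series satisfies ∑_{k=0}^{N} (a;q)_k (b;q)_k (q^{-N};q)_k / ((c;q)_k (a b q^{1-N}/c;q)_k (q;q)_k) · q^k = (c/a;q)_N (c/b;q)_N / ((c;q)_N (c/(ab);q)_N), where (x;q)_k = ∏_{j=0}^{k-1}(1 - x q^j) and 0 < |q| < 1 (the identity holds as a rational function identity whenever all denominators are nonzero). -/

import Mathlib

set_option maxHeartbeats 1000000

noncomputable def qp (q x : ℂ) (k : ℕ) : ℂ := ∏ j ∈ Finset.range k, (1 - x * q ^ j)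

noncomputable def qpi (q x : ℂ) : ℂ := ∏' j : ℕ, (1 - x * q ^ j)

private lemma qp_succ (q x : ℂ) (k : ℕ) : qp q x (k+1) = qp q x k * (1 - x * q ^ k) :=
  Finset.prod_range_succ _ _

private lemma qp_shift (q x : ℂ) (k : ℕ) : qp q x (k+1) = (1 - x) * qp q (x * q) k := by
  unfold qp
  rw [Finset.prod_range_succ']
  simp only [pow_zero, mul_one, pow_succ]
  rw [mul_comm]
  congr 1
  apply Finset.prod_congr rfl
  intro i _
  ring_nf

private lemma qp_ne_zero_of_le {q x : ℂ} {j k : ℕ} (h : j ≤ k) (hk : qp q x k ≠ 0) :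
    qp q x j ≠ 0 := by
  obtain ⟨d, rfl⟩ := Nat.exists_eq_add_of_le h
  unfold qp at hk ⊢
  rw [Finset.prod_range_add] at hk
  exact fun h0 => hk (by rw [h0, zero_mul])

private lemma qp_inv_pow_self {q : ℂ} (hq : q ≠ 0) (N : ℕ) : qp q ((q ^ N)⁻¹) (N+1) = 0 := by
  unfold qp
  apply Finset.prod_eq_zero (Finset.self_mem_range_succ N)
  rw [inv_mul_cancel₀ (pow_ne_zero _ hq), sub_self]

private lemma right_ne (x y : ℂ) (h : x * y ≠ 0) : y ≠ 0 := fun h0 => h (by rw [h0, mul_zero])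
private lemma left_ne (x y : ℂ) (h : x * y ≠ 0) : x ≠ 0 := fun h0 => h (by rw [h0, zero_mul])

private lemma ptwise (q a b c ν A B Nu C2 E2 Q2 x : ℂ)
    (hq : q ≠ 0) (hc : c ≠ 0)
    (h1c : 1 - c ≠ 0) (hE : c - a*b*ν ≠ 0)
    (hqx : 1 - q*x ≠ 0) :
    (A*(1-a*x)) * ((1-b)*B) * ((1-ν/q)*Nu) /
        ((1-c)*C2 * ((1-a*b*ν/c)*E2) * (Q2*(1-q*x))) * (x*q)
      = ((1-a/q)*A) * ((1-b)*B) * (Nu*(1-ν*x)) /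
          ((1-c)*C2 * ((1-a*b*ν/c)*E2) * (Q2*(1-q*x))) * (x*q)
        + ((1-b)*(a-ν)/((1-c)*(1-a*b*ν/c))) * (A*B*Nu/(C2*E2*Q2)*x) := by
  have h1e : 1 - a*b*ν/c ≠ 0 := by
    rw [sub_div' hc, one_mul]
    exact div_ne_zero hE hc
  have hs : (1-a*x)*(1-b)*(1-ν/q)*q/((1-c)*(1-a*b*ν/c)*(1-q*x))
      = (1-a/q)*(1-b)*(1-ν*x)*q/((1-c)*(1-a*b*ν/c)*(1-q*x))
        + (1-b)*(a-ν)/((1-c)*(1-a*b*ν/c)) := by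
    have hqx' : 1 - x*q ≠ 0 := by rwa [mul_comm]
    field_simp
    ring
  calc (A*(1-a*x)) * ((1-b)*B) * ((1-ν/q)*Nu) /
        ((1-c)*C2 * ((1-a*b*ν/c)*E2) * (Q2*(1-q*x))) * (x*q)
      = ((1-a*x)*(1-b)*(1-ν/q)*q/((1-c)*(1-a*b*ν/c)*(1-q*x)))
          * (A*B*Nu/(C2*E2*Q2)*x) := by
        simp only [div_eq_mul_inv, mul_inv]; ring
    _ = ((1-a/q)*(1-b)*(1-ν*x)*q/((1-c)*(1-a*b*ν/c)*(1-q*x))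
          + (1-b)*(a-ν)/((1-c)*(1-a*b*ν/c))) * (A*B*Nu/(C2*E2*Q2)*x) := by rw [hs]
    _ = _ := by simp only [div_eq_mul_inv, mul_inv, add_mul]; ring

private lemma final_alg (a b c n W1 W2 W3 W6 : ℂ)
    (ha : a ≠ 0) (hb : b ≠ 0) (hc : c ≠ 0) (hn : n ≠ 0)
    (hW3 : W3 ≠ 0) (hW6 : W6 ≠ 0)
    (h1c : 1 - c ≠ 0) (h1cn : 1 - c*n ≠ 0)
    (h1cab : 1 - c/(a*b) ≠ 0) (h1cabn : 1 - c/(a*b)*n ≠ 0) :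
    W1*W2/(W3*(W6*(1-c/(a*b)*n)/(1-c/(a*b))))
      + ((1-b)*(a-n⁻¹)/((1-c)*(1-a*b*n⁻¹/c))) * (W1*W2/((W3*(1-c*n)/(1-c))*W6))
    = ((1-c/a)*W1)*(W2*(1-c/b*n))/((W3*(1-c*n))*(W6*(1-c/(a*b)*n))) := by
  have hab : a*b ≠ 0 := mul_ne_zero ha hb
  have habc : a*b - c ≠ 0 := by
    intro h; apply h1cab
    field_simp
    linear_combination h
  have habcn : a*b - c*n ≠ 0 := by
    intro h; apply h1cabn
    field_simp
    linear_combination h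
  have hcnab : c*n - a*b ≠ 0 := by
    intro h; apply habcn; linear_combination -h
  have T1 : W1*W2/(W3*(W6*(1-c/(a*b)*n)/(1-c/(a*b))))
      = W1*W2*(a*b-c)/(W3*W6*(a*b-c*n)) := by
    rw [div_eq_div_iff]
    · field_simp
    · apply mul_ne_zero hW3
      apply div_ne_zero (mul_ne_zero hW6 h1cabn) h1cab
    · exact mul_ne_zero (mul_ne_zero hW3 hW6) habcn
  have T2 : ((1-b)*(a-n⁻¹)/((1-c)*(1-a*b*n⁻¹/c))) * (W1*W2/((W3*(1-c*n)/(1-c))*W6))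
      = W1*W2*((1-b)*(a*n-1)*c)/(W3*W6*((c*n-a*b)*(1-c*n))) := by
    have h1e : 1 - a*b*n⁻¹/c ≠ 0 := by
      rw [sub_div' hc, one_mul]
      apply div_ne_zero _ hc
      intro h; apply hcnab
      have := mul_ne_zero hc hn
      field_simp at h
      linear_combination h
    rw [div_mul_div_comm, div_eq_div_iff]
    · field_simp
    · apply mul_ne_zero (mul_ne_zero h1c h1e)
      exact mul_ne_zero (div_ne_zero (mul_ne_zero hW3 h1cn) h1c) hW6
    · exact mul_ne_zero (mul_ne_zero hW3 hW6) (mul_ne_zero hcnab h1cn)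
  have T3 : ((1-c/a)*W1)*(W2*(1-c/b*n))/((W3*(1-c*n))*(W6*(1-c/(a*b)*n)))
      = W1*W2*((a-c)*(b-c*n))/(W3*W6*((1-c*n)*(a*b-c*n))) := by
    rw [div_eq_div_iff]
    · field_simp
    · apply mul_ne_zero (mul_ne_zero hW3 h1cn) (mul_ne_zero hW6 h1cabn)
    · exact mul_ne_zero (mul_ne_zero hW3 hW6) (mul_ne_zero h1cn habcn)
  rw [T1, T2, T3, div_add_div _ _ (mul_ne_zero (mul_ne_zero hW3 hW6) habcn)
      (mul_ne_zero (mul_ne_zero hW3 hW6) (mul_ne_zero hcnab h1cn)),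
    div_eq_div_iff (mul_ne_zero (mul_ne_zero (mul_ne_zero hW3 hW6) habcn)
      (mul_ne_zero (mul_ne_zero hW3 hW6) (mul_ne_zero hcnab h1cn)))
      (mul_ne_zero (mul_ne_zero hW3 hW6) (mul_ne_zero h1cn habcn))]
  ring

private noncomputable def Tm (q a b c : ℂ) (M k : ℕ) : ℂ :=
  qp q a k * qp q b k * qp q (q ^ (-(M : ℤ))) k /
    (qp q c k * qp q (a * b * q ^ ((1 : ℤ) - M) / c) k * qp q q k) * q ^ k

private theorem aux (q : ℂ) (hq : q ≠ 0) (N : ℕ) :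
    ∀ (a b c : ℂ), a ≠ 0 → b ≠ 0 → c ≠ 0 →
    (∀ k ≤ N, qp q c k ≠ 0 ∧ qp q (a * b * q ^ ((1 : ℤ) - N) / c) k ≠ 0 ∧ qp q q k ≠ 0) →
    (qp q c N ≠ 0 ∧ qp q (c / (a * b)) N ≠ 0) →
    ∑ k ∈ Finset.range (N + 1), Tm q a b c N k
      = qp q (c / a) N * qp q (c / b) N / (qp q c N * qp q (c / (a * b)) N) := by
  induction N with
  | zero =>
    intro a b c _ _ _ _ _
    simp [Tm, qp]
  | succ N ih =>
    intro a b c ha hb hc hden hdenN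
    have hqN : (q:ℂ)^N ≠ 0 := pow_ne_zero _ hq
    have znu : (q:ℂ) ^ (-(N : ℤ)) = (q^N)⁻¹ := by rw [zpow_neg, zpow_natCast]
    have zmu : (q:ℂ) ^ (-((N+1 : ℕ) : ℤ)) = (q^N)⁻¹ / q := by
      rw [zpow_neg, zpow_natCast, pow_succ, mul_inv, div_eq_mul_inv]
    have zq1N : (q:ℂ) ^ ((1:ℤ) - (N:ℤ)) = q * (q^N)⁻¹ := by
      rw [zpow_sub₀ hq, zpow_one, zpow_natCast, div_eq_mul_inv]
    have zeN1 : a * b * q ^ ((1:ℤ) - ((N+1:ℕ):ℤ)) / c = a*b*(q^N)⁻¹/c := by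
      rw [show ((1:ℤ) - ((N+1:ℕ):ℤ)) = -(N:ℤ) by push_cast; ring, znu]
    have e1eq : (a/q) * b * q ^ ((1:ℤ) - (N:ℤ)) / c = a*b*(q^N)⁻¹/c := by
      rw [zq1N]; field_simp
    have e2eq : a * (b*q) * q ^ ((1:ℤ) - (N:ℤ)) / (c*q) = (a*b*(q^N)⁻¹/c)*q := by
      rw [zq1N]; field_simp
    simp only [zeN1] at hden
    have qp1 : ∀ x : ℂ, qp q x 1 = 1 - x := by intro x; simp [qp]
    have h1c : (1:ℂ) - c ≠ 0 := by
      have h := (hden 1 (by omega)).1; rwa [qp1] at h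
    have h1e : (1:ℂ) - a*b*(q^N)⁻¹/c ≠ 0 := by
      have h := (hden 1 (by omega)).2.1; rwa [qp1] at h
    have hcE : c - a*b*(q^N)⁻¹ ≠ 0 := by
      intro h; apply h1e
      rw [sub_div' hc, one_mul, h, zero_div]
    have hC2 : ∀ j ≤ N, qp q (c*q) j ≠ 0 := by
      intro j hj
      have h := (hden (j+1) (by omega)).1
      rw [qp_shift] at h
      exact right_ne _ _ h
    have hE2 : ∀ j ≤ N, qp q ((a*b*(q^N)⁻¹/c)*q) j ≠ 0 := by
      intro j hj
      have h := (hden (j+1) (by omega)).2.1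
      rw [qp_shift] at h
      exact right_ne _ _ h
    have hQ : ∀ j ≤ N+1, qp q q j ≠ 0 := fun j hj => (hden j hj).2.2
    have hqx : ∀ j ≤ N, (1:ℂ) - q*q^j ≠ 0 := by
      intro j hj
      have h := hQ (j+1) (by omega)
      rw [qp_succ] at h
      exact right_ne _ _ h
    -- IH instance 1 : (a/q, b, c)
    have key1 := ih (a/q) b c (div_ne_zero ha hq) hb hc
      (by
        intro k hk
        refine ⟨(hden k (by omega)).1, ?_, (hden k (by omega)).2.2⟩
        rw [e1eq]
        exact (hden k (by omega)).2.1)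
      (by
        refine ⟨qp_ne_zero_of_le (by omega) hdenN.1, ?_⟩
        rw [show c/((a/q)*b) = c/(a*b)*q by field_simp]
        have h := hdenN.2
        rw [qp_shift] at h
        exact right_ne _ _ h)
    -- IH instance 2 : (a, b*q, c*q)
    have key2 := ih a (b*q) (c*q) ha (mul_ne_zero hb hq) (mul_ne_zero hc hq)
      (by
        intro k hk
        refine ⟨hC2 k hk, ?_, (hden k (by omega)).2.2⟩
        rw [e2eq]
        exact hE2 k hk)
      (by
        refine ⟨hC2 N le_rfl, ?_⟩
        rw [show (c*q)/(a*(b*q)) = c/(a*b) by field_simp]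
        exact qp_ne_zero_of_le (by omega) hdenN.2)
    -- pointwise identity
    have key : ∀ j ∈ Finset.range (N+1), Tm q a b c (N+1) (j+1)
        = Tm q (a/q) b c N (j+1)
          + ((1-b)*(a-(q^N)⁻¹)/((1-c)*(1-a*b*(q^N)⁻¹/c))) * Tm q a (b*q) (c*q) N j := by
      intro j hj
      rw [Finset.mem_range] at hj
      have hjN : j ≤ N := by omega
      simp only [Tm]
      rw [zmu, zeN1, znu, e1eq, e2eq]
      rw [qp_succ q a j, qp_shift q b j, qp_shift q ((q^N)⁻¹/q) j,
        div_mul_cancel₀ _ hq, qp_shift q c j, qp_shift q (a*b*(q^N)⁻¹/c) j,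
        qp_succ q q j, qp_shift q (a/q) j, div_mul_cancel₀ a hq,
        qp_succ q ((q^N)⁻¹) j, pow_succ q j]
      exact ptwise q a b c ((q^N)⁻¹) (qp q a j) (qp q (b*q) j) (qp q ((q^N)⁻¹) j)
        (qp q (c*q) j) (qp q ((a*b*(q^N)⁻¹/c)*q) j) (qp q q j) (q^j)
        hq hc h1c hcE (hqx j hjN)
    -- sum manipulation
    have sum1 : ∑ k ∈ Finset.range (N+1+1), Tm q a b c (N+1) k
        = (∑ k ∈ Finset.range (N+1), Tm q (a/q) b c N k)
          + ((1-b)*(a-(q^N)⁻¹)/((1-c)*(1-a*b*(q^N)⁻¹/c)))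
            * ∑ k ∈ Finset.range (N+1), Tm q a (b*q) (c*q) N k := by
      have t0 : Tm q a b c (N+1) 0 = Tm q (a/q) b c N 0 := by simp [Tm, qp]
      have tN : Tm q (a/q) b c N (N+1) = 0 := by
        simp only [Tm, znu]
        rw [qp_inv_pow_self hq]
        simp
      rw [Finset.sum_range_succ' (fun k => Tm q a b c (N+1) k) (N+1),
        Finset.sum_congr rfl key, Finset.sum_add_distrib, ← Finset.mul_sum, t0]
      have hS : (∑ j ∈ Finset.range (N+1), Tm q (a/q) b c N (j+1)) + Tm q (a/q) b c N 0
          = ∑ k ∈ Finset.range (N+1), Tm q (a/q) b c N k := by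
        rw [← Finset.sum_range_succ' (fun k => Tm q (a/q) b c N k) (N+1),
          Finset.sum_range_succ, tN, add_zero]
      linear_combination hS
    rw [sum1, key1, key2]
    -- final algebra
    have hW3 : qp q c N ≠ 0 := qp_ne_zero_of_le (by omega) hdenN.1
    have hW6 : qp q (c/(a*b)) N ≠ 0 := qp_ne_zero_of_le (by omega) hdenN.2
    have h1cqN : (1:ℂ) - c*q^N ≠ 0 := by
      have h := hdenN.1
      rw [qp_succ] at h
      exact right_ne _ _ h
    have h1cabn : (1:ℂ) - c/(a*b)*q^N ≠ 0 := by
      have h := hdenN.2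
      rw [qp_succ] at h
      exact right_ne _ _ h
    have h1cab : (1:ℂ) - c/(a*b) ≠ 0 := by
      have h := hdenN.2
      rw [qp_shift] at h
      exact left_ne _ _ h
    have r1 : qp q (c*q) N = qp q c N * (1 - c*q^N)/(1-c) := by
      rw [eq_div_iff h1c]
      rw [← qp_succ]
      rw [qp_shift]
      ring
    have r2 : qp q (c/(a*b)*q) N = qp q (c/(a*b)) N * (1 - c/(a*b)*q^N)/(1-c/(a*b)) := by
      rw [eq_div_iff h1cab]
      rw [← qp_succ]
      rw [qp_shift]
      ring
    rw [show c/(a/q) = c/a*q by rw [div_div_eq_mul_div, div_mul_eq_mul_div],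
      show c/((a/q)*b) = c/(a*b)*q by field_simp,
      show (c*q)/a = c/a*q by rw [div_mul_eq_mul_div],
      show (c*q)/(b*q) = c/b by field_simp,
      show (c*q)/(a*(b*q)) = c/(a*b) by field_simp,
      r1, r2,
      qp_shift q (c/a) N, qp_succ q (c/b) N, qp_succ q c N, qp_succ q (c/(a*b)) N,
      show c/a*q = c/a*q from rfl]
    exact final_alg a b c (q^N) (qp q (c/a*q) N) (qp q (c/b) N) (qp q c N)
      (qp q (c/(a*b)) N) ha hb hc hqN hW3 hW6 h1c h1cqN h1cab h1cabn

/-- Jackson's q-Pfaff-Saalschütz summation. -/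
theorem qPfaffSaalschuetz (q a b c : ℂ) (N : ℕ)
    (hq0 : 0 < ‖q‖) (hq1 : ‖q‖ < 1)
    (ha : a ≠ 0) (hb : b ≠ 0) (hc : c ≠ 0)
    (hden : ∀ k ≤ N, qp q c k ≠ 0 ∧ qp q (a * b * q ^ ((1 : ℤ) - N) / c) k ≠ 0 ∧ qp q q k ≠ 0)
    (hdenN : qp q c N ≠ 0 ∧ qp q (c / (a * b)) N ≠ 0) :
    ∑ k ∈ Finset.range (N + 1),
        qp q a k * qp q b k * qp q (q ^ (-(N : ℤ))) k /
          (qp q c k * qp q (a * b * q ^ ((1 : ℤ) - N) / c) k * qp q q k) * q ^ k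
      = qp q (c / a) N * qp q (c / b) N / (qp q c N * qp q (c / (a * b)) N) := by
  have hq : q ≠ 0 := by
    intro h
    rw [h] at hq0
    simp at hq0
  have := aux q hq N a b c ha hb hc hden hdenN
  simpa only [Tm] using this
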